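/- arXiv:2207.04083 — 3 statements merged into one kernel-verified Lean document; each statement's English description precedes it below -/
import Mathlib

section
/- Let X be an n×n real matrix with XᵀX = Iₙ (orthonormal), let y ∈ ℝⁿ, and define L(α) = ‖y − Xα‖₂ + ‖α‖₂ (i.e., penalty parameter λ = 1). Then for every k ∈ [0,1], the vector α = k·Xᵀy is a global minimizer of L, and L(k·Xᵀy) = ‖y‖₂. -/
open scoped BigOperators

/-- Euclidean norm of a vector in `ℝᵐ`. -/
noncomputable def norm2 {m : ℕ} (v : Fin m → ℝ) : ℝ := Real.sqrt (∑ i, (v i) ^ 2)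

/-- The square-root group-LASSO objective with orthonormal design:
`L(α) = ‖y − Xα‖₂ + λ‖α‖₂`. -/
noncomputable def sqrtGroupLassoObj {n : ℕ} (X : Matrix (Fin n) (Fin n) ℝ)
    (y : Fin n → ℝ) (lam : ℝ) (α : Fin n → ℝ) : ℝ :=
  norm2 (y - X.mulVec α) + lam * norm2 α

lemma norm2_eq_norm {m : ℕ} (v : Fin m → ℝ) :
    norm2 v = ‖(WithLp.equiv 2 (Fin m → ℝ)).symm v‖ := by
  rw [EuclideanSpace.norm_eq]
  simp [norm2, Real.norm_eq_abs, sq_abs]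

lemma norm2_smul {m : ℕ} (c : ℝ) (v : Fin m → ℝ) :
    norm2 (c • v) = |c| * norm2 v := by
  rw [norm2_eq_norm, norm2_eq_norm, ← Real.norm_eq_abs, ← norm_smul]
  rfl

lemma norm2_mulVec {n : ℕ} (X : Matrix (Fin n) (Fin n) ℝ)
    (hX : X.transpose * X = 1) (a : Fin n → ℝ) :
    norm2 (X.mulVec a) = norm2 a := by
  unfold norm2
  congr 1
  have h1 : ∀ w : Fin n → ℝ, ∑ i, (w i)^2 = dotProduct w w := by
    intro w; simp [dotProduct, sq]
  rw [h1, h1, Matrix.dotProduct_mulVec, ← Matrix.mulVec_transpose,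
    Matrix.mulVec_mulVec, hX, Matrix.one_mulVec]

lemma norm2_triangle {m : ℕ} (a b : Fin m → ℝ) :
    norm2 a ≤ norm2 (a - b) + norm2 b := by
  rw [norm2_eq_norm, norm2_eq_norm, norm2_eq_norm]
  have : (WithLp.equiv 2 (Fin m → ℝ)).symm a
      = (WithLp.equiv 2 (Fin m → ℝ)).symm (a - b) + (WithLp.equiv 2 (Fin m → ℝ)).symm b := by
    rw [WithLp.equiv_symm_apply, ← WithLp.toLp_add, sub_add_cancel]
  rw [this]
  exact norm_add_le _ _

/-- With orthonormal design `XᵀX = Iₙ` and penalty `λ = 1`, for every `k ∈ [0,1]`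
the vector `k·Xᵀy` is a global minimizer of `L(α) = ‖y − Xα‖₂ + ‖α‖₂`,
and its objective value is `‖y‖₂`. -/
theorem convexCombination_isMinimizer {n : ℕ} (X : Matrix (Fin n) (Fin n) ℝ)
    (hX : X.transpose * X = 1) (y : Fin n → ℝ)
    (k : ℝ) (hk : k ∈ Set.Icc (0 : ℝ) 1) :
    (∀ α : Fin n → ℝ,
        sqrtGroupLassoObj X y 1 (k • X.transpose.mulVec y) ≤ sqrtGroupLassoObj X y 1 α) ∧
      sqrtGroupLassoObj X y 1 (k • X.transpose.mulVec y) = norm2 y := by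
  obtain ⟨hk0, hk1⟩ := hk
  have hXXt : X * X.transpose = 1 := mul_eq_one_comm.mp hX
  have hval : sqrtGroupLassoObj X y 1 (k • X.transpose.mulVec y) = norm2 y := by
    have hXty : X.mulVec (X.transpose.mulVec y) = y := by
      rw [Matrix.mulVec_mulVec, hXXt, Matrix.one_mulVec]
    have h1 : X.mulVec (k • X.transpose.mulVec y) = k • y := by
      rw [Matrix.mulVec_smul, hXty]
    have h2 : norm2 (X.transpose.mulVec y) = norm2 y := by
      apply norm2_mulVec
      rw [Matrix.transpose_transpose]; exact hXXt
    have h3 : y - k • y = (1 - k) • y := by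
      ext i; simp [sub_smul]; ring
    rw [sqrtGroupLassoObj, h1, h3, norm2_smul, norm2_smul, h2,
      abs_of_nonneg (by linarith), abs_of_nonneg hk0]
    ring
  refine ⟨fun α => ?_, hval⟩
  rw [hval, sqrtGroupLassoObj, one_mul, ← norm2_mulVec X hX α]
  exact norm2_triangle y (X.mulVec α)
end

section
/- Let z ∈ ℝᵐ, let λ > 0, and define G(β) = ‖z − β‖₂ + λ‖β‖₁ for β ∈ ℝᵐ. For a threshold t ≥ 0, the soft-thresholding function is η_t(x) = sign(x)·max(|x| − t, 0) for x ∈ ℝ, applied componentwise to vectors. Then for any β ∈ ℝᵐ with β ≠ z, the vector β is a global minimizer of G if and only if β_i = η_{λ‖z−β‖₂}(z_i) for every i = 1,…,m. -/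
open scoped BigOperators

/-- ℓ1-norm of a vector in `ℝᵐ`. -/
noncomputable def norm1 {m : ℕ} (v : Fin m → ℝ) : ℝ := ∑ i, |v i|

/-- Soft-thresholding with threshold `t`: `η_t(x) = sign(x)·max(|x| − t, 0)`. -/
noncomputable def soft (t x : ℝ) : ℝ := Real.sign x * max (|x| - t) 0

/-- The square-root soft-waveshrink objective in the orthonormal wavelet domain:
`G(β) = ‖z − β‖₂ + λ‖β‖₁`. -/
noncomputable def srswObj {m : ℕ} (z : Fin m → ℝ) (lam : ℝ) (β : Fin m → ℝ) : ℝ :=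
  norm2 (z - β) + lam * norm1 β

lemma norm2_nonneg {m : ℕ} (v : Fin m → ℝ) : 0 ≤ norm2 v := Real.sqrt_nonneg _

lemma sq_norm2 {m : ℕ} (v : Fin m → ℝ) : (norm2 v) ^ 2 = ∑ i, (v i) ^ 2 :=
  Real.sq_sqrt (Finset.sum_nonneg fun i _ => sq_nonneg _)

lemma norm2_pos {m : ℕ} {v : Fin m → ℝ} (hv : v ≠ 0) : 0 < norm2 v := by
  rcases Function.ne_iff.mp hv with ⟨j, hj⟩
  apply Real.sqrt_pos.mpr
  have hj2 : (0:ℝ) < v j ^ 2 :=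
    lt_of_le_of_ne (sq_nonneg _) (Ne.symm (pow_ne_zero 2 hj))
  calc (0:ℝ) < v j ^ 2 := hj2
    _ ≤ ∑ i, (v i) ^ 2 :=
        Finset.single_le_sum (f := fun i => v i ^ 2) (fun i _ => sq_nonneg _) (Finset.mem_univ j)

lemma cauchy_schwarz {m : ℕ} (u v : Fin m → ℝ) :
    ∑ i, u i * v i ≤ norm2 u * norm2 v := by
  have h := Finset.sum_mul_sq_le_sq_mul_sq Finset.univ u v
  calc ∑ i, u i * v i ≤ |∑ i, u i * v i| := le_abs_self _
    _ = Real.sqrt ((∑ i, u i * v i) ^ 2) := (Real.sqrt_sq_eq_abs _).symm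
    _ ≤ Real.sqrt ((∑ i, u i ^ 2) * ∑ i, v i ^ 2) := Real.sqrt_le_sqrt h
    _ = norm2 u * norm2 v := by
        rw [norm2, norm2, ← Real.sqrt_mul (Finset.sum_nonneg fun i _ => sq_nonneg _)]

/-- Key one-dimensional first-order-condition lemma. -/
lemma key_real {r a b lam : ℝ} (hr : 0 < r) (hlam : 0 < lam)
    (h : ∀ t : ℝ, 0 ≤ (t ^ 2 - 2 * a * t) / (2 * r) + lam * (|b + t| - |b|)) :
    b = soft (lam * r) (a + b) := by
  rcases eq_or_ne b 0 with hb | hb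
  · subst hb
    have ha : |a| ≤ lam * r := by
      by_contra hc
      push_neg at hc
      set δ : ℝ := |a| - lam * r with hδ
      have hδpos : 0 < δ := by simp [hδ]; linarith
      set t : ℝ := (if 0 ≤ a then (1:ℝ) else -1) * δ with ht
      have hat : a * t = |a| * δ := by
        rcases le_or_gt 0 a with h1 | h1
        · rw [ht, if_pos h1, abs_of_nonneg h1]; ring
        · rw [ht, if_neg (not_le.mpr h1), abs_of_neg h1]; ring
      have habs : |(0:ℝ) + t| = δ := by
        rcases le_or_gt 0 a with h1 | h1
        · rw [ht, if_pos h1, zero_add, one_mul, abs_of_nonneg hδpos.le]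
        · rw [ht, if_neg (not_le.mpr h1), zero_add]
          rw [show (-1:ℝ) * δ = -δ by ring, abs_neg, abs_of_nonneg hδpos.le]
      have ht2 : t ^ 2 = δ ^ 2 := by
        rcases le_or_gt 0 a with h1 | h1
        · rw [ht, if_pos h1]; ring
        · rw [ht, if_neg (not_le.mpr h1)]; ring
      have := h t
      rw [habs, ht2] at this
      simp at this
      have h2r : (0:ℝ) < 2 * r := by linarith
      rw [div_add' _ _ _ (ne_of_gt h2r), le_div_iff₀ h2r] at this
      nlinarith
    rw [add_zero, soft]
    have : max (|a| - lam * r) 0 = 0 := max_eq_right (by linarith)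
    simp [this]
  · -- b ≠ 0
    set s : ℝ := if 0 < b then (1:ℝ) else -1 with hs
    have hsb : s * b = |b| := by
      rcases lt_or_ge 0 b with h1 | h1
      · simp [hs, h1, abs_of_pos h1]
      · simp [hs, not_lt.mpr h1, abs_of_nonpos h1]
    have habs : ∀ t : ℝ, |t| ≤ |b| → |b + t| = |b| + s * t := by
      intro t htb
      rcases lt_or_ge 0 b with h1 | h1
      · have hb' : |b| = b := abs_of_pos h1
        rw [hb'] at htb
        have : 0 ≤ b + t := by cases abs_le.mp htb; linarith
        simp [hs, h1, abs_of_nonneg this, hb']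
      · have hbneg : b < 0 := lt_of_le_of_ne h1 hb
        have hb' : |b| = -b := abs_of_neg hbneg
        rw [hb'] at htb
        have : b + t ≤ 0 := by cases abs_le.mp htb; linarith
        simp [hs, not_lt.mpr h1, abs_of_nonpos this, hb']; ring
    have key : a = lam * r * s := by
      by_contra hc
      set c : ℝ := lam * s - a / r with hc'
      have hrne : r ≠ 0 := ne_of_gt hr
      have hcne : c ≠ 0 := by
        intro h0
        apply hc
        have h1 : lam * s - a / r = 0 := by rw [← hc']; exact h0
        field_simp at h1
        linear_combination -h1
      set δ : ℝ := min |b| (r * |c|) with hδ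
      have hδpos : 0 < δ := lt_min (abs_pos.mpr hb) (by positivity)
      set t : ℝ := -(if 0 < c then (1:ℝ) else -1) * δ with ht
      have hct : c * t = -(|c| * δ) := by
        rcases lt_or_ge 0 c with h1 | h1
        · rw [ht, if_pos h1, abs_of_pos h1]; ring
        · have hcn : c < 0 := lt_of_le_of_ne h1 hcne
          rw [ht, if_neg (not_lt.mpr h1), abs_of_neg hcn]; ring
      have ht2 : t ^ 2 = δ ^ 2 := by
        rcases lt_or_ge 0 c with h1 | h1
        · rw [ht, if_pos h1]; ring
        · rw [ht, if_neg (not_lt.mpr h1)]; ring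
      have htb : |t| ≤ |b| := by
        have habst : |t| = δ := by
          rcases lt_or_ge 0 c with h1 | h1
          · rw [ht, if_pos h1, show (-(1:ℝ)) * δ = -δ by ring, abs_neg,
              abs_of_nonneg hδpos.le]
          · rw [ht, if_neg (not_lt.mpr h1), show (-(-1:ℝ)) * δ = δ by ring,
              abs_of_nonneg hδpos.le]
        rw [habst]; exact min_le_left _ _
      have := h t
      rw [habs t htb] at this
      have h2r : (0:ℝ) < 2 * r := by linarith
      have hexp : (t ^ 2 - 2 * a * t) / (2 * r) + lam * (|b| + s * t - |b|)
          = t ^ 2 / (2 * r) + c * t := by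
        field_simp [hc']
        have hcr : c * r = lam * s * r - a := by rw [hc', sub_mul, div_mul_cancel₀ a hrne]
        linear_combination (-2*t) * hcr
      rw [hexp] at this
      rw [hct, ht2] at this
      have hδle : δ ≤ r * |c| := min_le_right _ _
      have : (0:ℝ) ≤ δ ^ 2 / (2 * r) - |c| * δ := by linarith
      rw [div_sub' (ne_of_gt h2r), le_div_iff₀ h2r] at this
      have habsc : 0 < |c| := abs_pos.mpr hcne
      nlinarith
    -- now conclude
    rcases lt_or_ge 0 b with h1 | h1
    · have hs1 : s = 1 := by simp [hs, h1]
      rw [hs1, mul_one] at key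
      have hab : 0 < a + b := by nlinarith
      rw [soft, Real.sign_of_pos hab, abs_of_pos hab, one_mul, key]
      rw [max_eq_left (by linarith)]
      ring
    · have hbneg : b < 0 := lt_of_le_of_ne h1 hb
      have hs1 : s = -1 := by simp [hs, not_lt.mpr h1]
      rw [hs1] at key
      have hab : a + b < 0 := by nlinarith
      rw [soft, Real.sign_of_neg hab, abs_of_neg hab, neg_one_mul, key]
      rw [max_eq_left (by nlinarith)]
      ring

/-- For `λ > 0` and `β ≠ z`, the vector `β` is a global minimizer of
`G(β) = ‖z − β‖₂ + λ‖β‖₁` iff it satisfies the fixed-point soft-thresholding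
equation `βᵢ = η_{λ‖z−β‖₂}(zᵢ)` for every `i`. -/
theorem minimizer_iff_fixedPoint_srsw {m : ℕ} (z : Fin m → ℝ)
    (lam : ℝ) (hlam : 0 < lam) (β : Fin m → ℝ) (hβ : β ≠ z) :
    (∀ γ : Fin m → ℝ, srswObj z lam β ≤ srswObj z lam γ) ↔
      (∀ i, β i = soft (lam * norm2 (z - β)) (z i)) := by
  have hvne : z - β ≠ 0 := by
    intro h0
    exact hβ (by funext i; have := congrFun h0 i; simp [Pi.sub_apply] at this ⊢; linarith)
  set r : ℝ := norm2 (z - β) with hrdef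
  have hr : 0 < r := norm2_pos hvne
  have hr2 : r ^ 2 = ∑ i, (z i - β i) ^ 2 := by
    rw [hrdef, sq_norm2]; simp [Pi.sub_apply]
  constructor
  · intro hmin i
    -- derive the one-dimensional inequality and apply key_real
    have hkey : ∀ t : ℝ, 0 ≤ (t ^ 2 - 2 * (z i - β i) * t) / (2 * r)
        + lam * (|β i + t| - |β i|) := by
      intro t
      set γ : Fin m → ℝ := Function.update β i (β i + t) with hγ
      have hmin' := hmin γ
      have hnorm1 : norm1 γ = norm1 β - |β i| + |β i + t| := by
        rw [norm1, norm1]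
        rw [← Finset.add_sum_erase _ (fun j => |γ j|) (Finset.mem_univ i),
            ← Finset.add_sum_erase _ (fun j => |β j|) (Finset.mem_univ i)]
        have h1 : γ i = β i + t := by simp [hγ]
        have h2 : ∀ j ∈ Finset.univ.erase i, |γ j| = |β j| := by
          intro j hj
          have : j ≠ i := Finset.ne_of_mem_erase hj
          simp [hγ, Function.update_of_ne this]
        rw [h1, Finset.sum_congr rfl h2]
        ring
      have hsum : ∑ j, (z j - γ j) ^ 2 = r ^ 2 - 2 * (z i - β i) * t + t ^ 2 := by
        rw [hr2]
        rw [← Finset.add_sum_erase _ (fun j => (z j - γ j) ^ 2) (Finset.mem_univ i),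
            ← Finset.add_sum_erase _ (fun j => (z j - β j) ^ 2) (Finset.mem_univ i)]
        have h1 : γ i = β i + t := by simp [hγ]
        have h2 : ∀ j ∈ Finset.univ.erase i, (z j - γ j) ^ 2 = (z j - β j) ^ 2 := by
          intro j hj
          have : j ≠ i := Finset.ne_of_mem_erase hj
          simp [hγ, Function.update_of_ne this]
        rw [h1, Finset.sum_congr rfl h2]
        ring
      have hsum_nonneg : (0:ℝ) ≤ r ^ 2 - 2 * (z i - β i) * t + t ^ 2 := by
        rw [← hsum]; exact Finset.sum_nonneg fun j _ => sq_nonneg _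
      have hnorm2γ : norm2 (z - γ) ≤ r + (t ^ 2 - 2 * (z i - β i) * t) / (2 * r) := by
        have hsq : (norm2 (z - γ)) ^ 2 = r ^ 2 - 2 * (z i - β i) * t + t ^ 2 := by
          rw [sq_norm2]; simp only [Pi.sub_apply]; exact hsum
        have hn : 0 ≤ norm2 (z - γ) := norm2_nonneg _
        have h2r : (0:ℝ) < 2 * r := by linarith
        rw [← sub_le_iff_le_add', le_div_iff₀ h2r]
        nlinarith [sq_nonneg (norm2 (z - γ) - r)]
      have := hmin'
      rw [srswObj, srswObj, ← hrdef, hnorm1] at this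
      have h2r : (0:ℝ) < 2 * r := by linarith
      nlinarith [this, hnorm2γ]
    have := key_real hr hlam hkey
    rw [show z i - β i + β i = z i by ring] at this
    exact this
  · intro hfp γ
    set u : Fin m → ℝ := fun i => z i - β i with hu
    have hfacts : ∀ i, |u i| ≤ lam * r ∧ u i * β i = lam * r * |β i| := by
      intro i
      have hβi := hfp i
      rw [soft] at hβi
      rcases le_or_gt (|z i|) (lam * r) with hle | hgt
      · have : max (|z i| - lam * r) 0 = 0 := max_eq_right (by linarith)
        rw [this, mul_zero] at hβi
        constructor
        · simp [hu, hβi]; exact hle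
        · simp [hu, hβi]
      · have hmax : max (|z i| - lam * r) 0 = |z i| - lam * r :=
          max_eq_left (by linarith)
        rw [hmax] at hβi
        have hzne : z i ≠ 0 := by
          intro h0; rw [h0] at hgt; simp at hgt; nlinarith
        rcases lt_or_gt_of_ne hzne with hneg | hpos
        · rw [Real.sign_of_neg hneg, abs_of_neg hneg] at hβi
          have hβival : β i = z i + lam * r := by rw [hβi]; ring
          have hβineg : β i < 0 := by rw [abs_of_neg hneg] at hgt; linarith
          constructor
          · have hui : u i = -(lam * r) := by simp only [hu]; rw [hβival]; ring
            rw [hui, abs_neg, abs_of_pos (by positivity)]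
          · have hui : u i = -(lam * r) := by simp only [hu]; rw [hβival]; ring
            rw [hui, abs_of_neg hβineg]; ring
        · rw [Real.sign_of_pos hpos, abs_of_pos hpos, one_mul] at hβi
          have hβipos : 0 < β i := by rw [abs_of_pos hpos] at hgt; linarith
          constructor
          · have hui : u i = lam * r := by simp only [hu]; rw [hβi]; ring
            rw [hui, abs_of_pos (by positivity)]
          · have hui : u i = lam * r := by simp only [hu]; rw [hβi]; ring
            rw [hui, abs_of_pos hβipos]
    have hsum1 : ∑ i, u i * β i = lam * r * norm1 β := by
      rw [norm1, Finset.mul_sum]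
      exact Finset.sum_congr rfl fun i _ => (hfacts i).2
    have hsum2 : ∑ i, u i * γ i ≤ lam * r * norm1 γ := by
      rw [norm1, Finset.mul_sum]
      apply Finset.sum_le_sum
      intro i _
      calc u i * γ i ≤ |u i * γ i| := le_abs_self _
        _ = |u i| * |γ i| := abs_mul _ _
        _ ≤ lam * r * |γ i| := by
            apply mul_le_mul_of_nonneg_right (hfacts i).1 (abs_nonneg _)
    have hcs : ∑ i, u i * (z i - γ i) ≤ r * norm2 (z - γ) := by
      have := cauchy_schwarz u (fun i => z i - γ i)
      have heq : norm2 (fun i => z i - γ i) = norm2 (z - γ) := by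
        congr 1
      rw [heq] at this
      have hun : norm2 u = r := by rw [hrdef]; congr 1
      rw [hun] at this
      exact this
    have hz : ∑ i, u i * z i = r ^ 2 + lam * r * norm1 β := by
      have : ∀ i, u i * z i = u i ^ 2 + u i * β i := by
        intro i; simp only [hu]; ring
      rw [Finset.sum_congr rfl fun i _ => this i, Finset.sum_add_distrib, hsum1, hr2]
    have hsplit : ∑ i, u i * z i = (∑ i, u i * (z i - γ i)) + ∑ i, u i * γ i := by
      rw [← Finset.sum_add_distrib]
      exact Finset.sum_congr rfl fun i _ => by ring
    have hmain : r ^ 2 + lam * r * norm1 β ≤ r * norm2 (z - γ) + lam * r * norm1 γ := by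
      rw [← hz, hsplit]; linarith
    rw [srswObj, srswObj, ← hrdef]
    have := mul_le_mul_of_nonneg_left hmain (le_of_lt (inv_pos.mpr hr))
    have hrne : r ≠ 0 := ne_of_gt hr
    calc r + lam * norm1 β = r⁻¹ * (r ^ 2 + lam * r * norm1 β) := by
          field_simp
      _ ≤ r⁻¹ * (r * norm2 (z - γ) + lam * r * norm1 γ) := this
      _ = norm2 (z - γ) + lam * norm1 γ := by field_simp
end

section
/- Fix β ∈ ℝᵐ and λ > 0, and define H(z) = η_{λ‖z−β‖₂}(z) ∈ ℝᵐ, where the soft-thresholding function η_t(x) = sign(x)·max(|x| − t, 0) is applied componentwise. Then H is Lipschitz continuous with Lipschitz constant (2 + λ)√m: for all z₁, z₂ ∈ ℝᵐ, ‖H(z₁) − H(z₂)‖₂ ≤ (2 + λ)√m · ‖z₁ − z₂‖₂. -/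
open scoped BigOperators

/-- `soft t x = x - clamp(x, -t, t)` for `t ≥ 0`. -/
lemma soft_eq_clamp (t x : ℝ) (ht : 0 ≤ t) :
    soft t x = x - max (min x t) (-t) := by
  unfold soft
  rcases lt_trichotomy x 0 with hx | hx | hx
  · rw [Real.sign_of_neg hx, abs_of_neg hx]
    rcases le_total (-t) x with h | h
    · rw [max_eq_right (by linarith : -x - t ≤ 0), min_eq_left (by linarith), max_eq_left h]
      ring
    · rw [max_eq_left (by linarith : (0:ℝ) ≤ -x - t), min_eq_left (by linarith), max_eq_right h]
      ring
  · subst hx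
    simp [ht, min_eq_left ht, max_eq_left (by linarith : -t ≤ (0:ℝ))]
  · rw [Real.sign_of_pos hx, abs_of_pos hx]
    rcases le_total x t with h | h
    · rw [max_eq_right (by linarith : x - t ≤ 0), min_eq_left h, max_eq_left (by linarith)]
      ring
    · rw [max_eq_left (by linarith : (0:ℝ) ≤ x - t), min_eq_right h, max_eq_left (by linarith)]
      ring

lemma soft_key (t s x y : ℝ) (ht : 0 ≤ t) (hs : 0 ≤ s) :
    |soft t x - soft s y| ≤ 2 * |x - y| + |t - s| := by
  rw [soft_eq_clamp t x ht, soft_eq_clamp s y hs]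
  have h1 : |max (min x t) (-t) - max (min y s) (-s)| ≤ max |min x t - min y s| |(-t) - (-s)| :=
    abs_max_sub_max_le_max _ _ _ _
  have h2 : |min x t - min y s| ≤ max |x - y| |t - s| := abs_min_sub_min_le_max _ _ _ _
  have h3 : max |x - y| |t - s| ≤ |x - y| + |t - s| :=
    max_le (le_add_of_nonneg_right (abs_nonneg _)) (le_add_of_nonneg_left (abs_nonneg _))
  have h4 : |(-t) - (-s)| = |t - s| := by rw [show (-t) - (-s) = -(t - s) by ring, abs_neg]
  have h5 : |max (min x t) (-t) - max (min y s) (-s)| ≤ |x - y| + |t - s| := by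
    refine h1.trans (max_le (h2.trans h3) ?_)
    rw [h4]; exact le_add_of_nonneg_left (abs_nonneg _)
  calc |(x - max (min x t) (-t)) - (y - max (min y s) (-s))|
      = |(x - y) - (max (min x t) (-t) - max (min y s) (-s))| := by ring_nf
    _ ≤ |x - y| + |max (min x t) (-t) - max (min y s) (-s)| := abs_sub _ _
    _ ≤ |x - y| + (|x - y| + |t - s|) := by linarith
    _ = 2 * |x - y| + |t - s| := by ring

lemma norm2_mono {m : ℕ} (u w : Fin m → ℝ) (h : ∀ i, |u i| ≤ w i) :
    norm2 u ≤ norm2 w := by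
  apply Real.sqrt_le_sqrt
  apply Finset.sum_le_sum
  intro i _
  calc (u i) ^ 2 = |u i| ^ 2 := (sq_abs _).symm
    _ ≤ (w i) ^ 2 := pow_le_pow_left₀ (abs_nonneg _) (h i) 2

lemma norm2_reverse_triangle {m : ℕ} (a b : Fin m → ℝ) :
    |norm2 a - norm2 b| ≤ norm2 (a - b) := by
  rw [norm2_eq_norm a, norm2_eq_norm b, norm2_eq_norm (a - b)]
  have : (WithLp.equiv 2 (Fin m → ℝ)).symm (a - b)
      = (WithLp.equiv 2 (Fin m → ℝ)).symm a - (WithLp.equiv 2 (Fin m → ℝ)).symm b := rfl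
  rw [this]
  exact abs_norm_sub_norm_le _ _

lemma norm2_add_le {m : ℕ} (a b : Fin m → ℝ) :
    norm2 (a + b) ≤ norm2 a + norm2 b := by
  rw [norm2_eq_norm a, norm2_eq_norm b, norm2_eq_norm (a + b)]
  exact norm_add_le _ _

lemma norm2_smul_abs {m : ℕ} (d : Fin m → ℝ) :
    norm2 (fun i => 2 * |d i|) = 2 * norm2 d := by
  unfold norm2
  rw [show ∑ i, (2 * |d i|) ^ 2 = 4 * ∑ i, (d i) ^ 2 by
      rw [Finset.mul_sum]; congr 1; ext i; rw [mul_pow, sq_abs]; ring]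
  rw [show (4 : ℝ) = 2 ^ 2 by norm_num, Real.sqrt_mul (by positivity), Real.sqrt_sq (by norm_num)]

lemma norm2_const {m : ℕ} (c : ℝ) (hc : 0 ≤ c) :
    norm2 (fun _ : Fin m => c) = c * Real.sqrt m := by
  unfold norm2
  rw [Finset.sum_const, Finset.card_univ, Fintype.card_fin, nsmul_eq_mul,
    Real.sqrt_mul (by positivity), Real.sqrt_sq hc]
  ring

/-- For fixed `β` and `λ > 0`, the map `z ↦ η_{λ‖z−β‖₂}(z)` is Lipschitz with
constant `(2 + λ)√m`. -/
theorem lipschitz_in_z {m : ℕ} (β : Fin m → ℝ) (lam : ℝ) (hlam : 0 < lam) :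
    ∀ z₁ z₂ : Fin m → ℝ,
      norm2 ((fun i => soft (lam * norm2 (z₁ - β)) (z₁ i)) -
              (fun i => soft (lam * norm2 (z₂ - β)) (z₂ i))) ≤
        (2 + lam) * Real.sqrt m * norm2 (z₁ - z₂) := by
  intro z₁ z₂
  set D := norm2 (z₁ - z₂) with hD
  have hD0 : 0 ≤ D := norm2_nonneg _
  rcases Nat.eq_zero_or_pos m with hm | hm
  · subst hm
    simp [norm2]
  -- pointwise bound
  have hpt : ∀ i, |soft (lam * norm2 (z₁ - β)) (z₁ i) - soft (lam * norm2 (z₂ - β)) (z₂ i)|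
      ≤ 2 * |z₁ i - z₂ i| + lam * D := by
    intro i
    have h1 := soft_key (lam * norm2 (z₁ - β)) (lam * norm2 (z₂ - β)) (z₁ i) (z₂ i)
      (mul_nonneg hlam.le (norm2_nonneg _)) (mul_nonneg hlam.le (norm2_nonneg _))
    have h2 : |lam * norm2 (z₁ - β) - lam * norm2 (z₂ - β)| ≤ lam * D := by
      rw [← mul_sub, abs_mul, abs_of_pos hlam]
      refine mul_le_mul_of_nonneg_left ?_ hlam.le
      have := norm2_reverse_triangle (z₁ - β) (z₂ - β)
      rwa [show (z₁ - β) - (z₂ - β) = z₁ - z₂ by ring] at this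
    linarith
  -- chain of norm bounds
  have hbnd : norm2 ((fun i => soft (lam * norm2 (z₁ - β)) (z₁ i)) -
              (fun i => soft (lam * norm2 (z₂ - β)) (z₂ i)))
      ≤ norm2 (fun i => 2 * |z₁ i - z₂ i| + lam * D) := by
    apply norm2_mono
    intro i
    simpa using hpt i
  have htri : norm2 (fun i => 2 * |z₁ i - z₂ i| + lam * D)
      ≤ 2 * D + lam * D * Real.sqrt m := by
    have := norm2_add_le (fun i => 2 * |z₁ i - z₂ i|) (fun _ => lam * D)
    have e1 : norm2 (fun i => 2 * |z₁ i - z₂ i|) = 2 * D := by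
      have := norm2_smul_abs (fun i => z₁ i - z₂ i)
      rw [this]; congr 1
    have e2 : norm2 (fun _ : Fin m => lam * D) = lam * D * Real.sqrt m :=
      norm2_const _ (mul_nonneg hlam.le hD0)
    calc norm2 (fun i => 2 * |z₁ i - z₂ i| + lam * D)
        = norm2 ((fun i => 2 * |z₁ i - z₂ i|) + fun _ => lam * D) := by rfl
      _ ≤ norm2 (fun i => 2 * |z₁ i - z₂ i|) + norm2 (fun _ : Fin m => lam * D) := this
      _ = 2 * D + lam * D * Real.sqrt m := by rw [e1, e2]
  have hsq : (1 : ℝ) ≤ Real.sqrt m := by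
    rw [show (1:ℝ) = Real.sqrt 1 by simp]
    exact Real.sqrt_le_sqrt (by exact_mod_cast hm)
  calc norm2 ((fun i => soft (lam * norm2 (z₁ - β)) (z₁ i)) -
              (fun i => soft (lam * norm2 (z₂ - β)) (z₂ i)))
      ≤ 2 * D + lam * D * Real.sqrt m := hbnd.trans htri
    _ ≤ 2 * Real.sqrt m * D + lam * Real.sqrt m * D := by nlinarith
    _ = (2 + lam) * Real.sqrt m * D := by ring
end
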